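/- Let (X, ρ) be an extended metric space in which every equivalence class of the relation E_ρ = {(x,y) : ρ(x,y) < ∞} is countable. Then for every r > 0 there exist sets U_0, U_1 covering X such that for i ∈ {0,1}, every class of the r-walk equivalence relation on U_i has finite diameter. (That is, the non-definable asymptotic separation index of any such space is at most 1.) -/

import Mathlib

open scoped ENNReal NNReal

/-- The `s`-walk equivalence relation on `U`. -/
def walkRel {X : Type*} [EMetricSpace X] (U : Set X) (s : ℝ≥0∞) : X → X → Prop :=
  Relation.EqvGen fun a b => a ∈ U ∧ b ∈ U ∧ edist a b ≤ s

/-- The setoid of finite distance. -/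
def eSetoid (X : Type*) [EMetricSpace X] : Setoid X where
  r x y := edist x y < ⊤
  iseqv := ⟨fun x => by simp [edist_self],
    fun {x y} h => by rwa [edist_comm],
    fun {x y z} h1 h2 =>
      lt_of_le_of_lt (edist_triangle x y z) (ENNReal.add_lt_top.mpr ⟨h1, h2⟩)⟩

/-- A chosen representative of each finite-distance class. -/
noncomputable def eBase {X : Type*} [EMetricSpace X] (x : X) : X :=
  Quotient.out (Quotient.mk (eSetoid X) x)

theorem edist_eBase_lt_top {X : Type*} [EMetricSpace X] (x : X) :
    edist x (eBase x) < ⊤ := by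
  have h : (eSetoid X).r (eBase x) x := Quotient.mk_out x
  rw [edist_comm]; exact h

theorem eBase_eq {X : Type*} [EMetricSpace X] {x y : X} (h : edist x y < ⊤) :
    eBase x = eBase y := by
  unfold eBase
  congr 1
  exact Quotient.sound h

theorem stmt18 {X : Type*} [EMetricSpace X]
    (hcount : ∀ x : X, {y : X | edist x y < ⊤}.Countable) :
    ∀ r : ℝ≥0, 0 < r → ∃ U₀ U₁ : Set X, U₀ ∪ U₁ = Set.univ ∧
      (∀ x : X, ∃ R : ℝ≥0, ∀ y : X,
        walkRel U₀ (r : ℝ≥0∞) x y → edist x y ≤ (R : ℝ≥0∞)) ∧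
      (∀ x : X, ∃ R : ℝ≥0, ∀ y : X,
        walkRel U₁ (r : ℝ≥0∞) x y → edist x y ≤ (R : ℝ≥0∞)) := by
  intro r hr
  set t : X → ℝ≥0 := fun x => (edist x (eBase x)).toNNReal with ht
  have hcoe : ∀ x : X, edist x (eBase x) = (t x : ℝ≥0∞) := fun x =>
    (ENNReal.coe_toNNReal (edist_eBase_lt_top x).ne).symm
  set k : X → ℕ := fun x => ⌊t x / (2 * r)⌋₊ with hk
  have h2r : (2 * r : ℝ≥0) ≠ 0 := by positivity
  -- key: close points have same base and adjacent annulus index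
  have key : ∀ a b : X, edist a b ≤ (r : ℝ≥0∞) →
      eBase a = eBase b ∧ k a ≤ k b + 1 := by
    intro a b hab
    have hfin : edist a b < ⊤ := lt_of_le_of_lt hab ENNReal.coe_lt_top
    have hbase : eBase a = eBase b := eBase_eq hfin
    refine ⟨hbase, ?_⟩
    have htri : (t a : ℝ≥0∞) ≤ (t b + r : ℝ≥0) := by
      rw [← hcoe a, hbase]
      calc edist a (eBase b) ≤ edist a b + edist b (eBase b) := edist_triangle _ _ _
        _ ≤ (r : ℝ≥0∞) + (t b : ℝ≥0∞) := add_le_add hab (le_of_eq (hcoe b))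
        _ = ((t b + r : ℝ≥0) : ℝ≥0∞) := by rw [add_comm]; simp
    have hta : t a ≤ t b + r := by exact_mod_cast htri
    have hdiv : t a / (2 * r) ≤ t b / (2 * r) + 1 := by
      have h1 : t a ≤ t b + 2 * r := hta.trans (by
        gcongr
        rw [two_mul]; exact le_add_self)
      have h2 : t a / (2 * r) ≤ (t b + 2 * r) / (2 * r) := by gcongr
      rwa [add_div, div_self h2r] at h2
    calc k a ≤ ⌊t b / (2 * r) + 1⌋₊ := Nat.floor_le_floor hdiv
      _ = k b + 1 := by rw [Nat.floor_add_one (zero_le (a := t b / (2 * r)))]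
  -- main argument for a parity class
  have main : ∀ U : Set X,
      (∀ a ∈ U, ∀ b ∈ U, edist a b ≤ (r : ℝ≥0∞) → k a = k b) →
      ∀ x : X, ∃ R : ℝ≥0, ∀ y : X,
        walkRel U (r : ℝ≥0∞) x y → edist x y ≤ (R : ℝ≥0∞) := by
    intro U hU x
    refine ⟨t x + 2 * r * (k x + 1), fun y hw => ?_⟩
    have inv : ∀ a b : X, walkRel U (r : ℝ≥0∞) a b →
        a = b ∨ (eBase a = eBase b ∧ k a = k b) := by
      intro a b hab
      induction hab with
      | rel a b h => exact Or.inr ⟨(key a b h.2.2).1, hU a h.1 b h.2.1 h.2.2⟩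
      | refl a => exact Or.inl rfl
      | symm a b _ ih => rcases ih with h | ⟨h1, h2⟩
                         · exact Or.inl h.symm
                         · exact Or.inr ⟨h1.symm, h2.symm⟩
      | trans a b c _ _ ih1 ih2 =>
          rcases ih1 with h | ⟨h1, h2⟩
          · rwa [h]
          · rcases ih2 with h' | ⟨h1', h2'⟩
            · exact Or.inr ⟨h' ▸ h1, h' ▸ h2⟩
            · exact Or.inr ⟨h1.trans h1', h2.trans h2'⟩
    rcases inv x y hw with h | ⟨h1, h2⟩
    · simp [← h]
    · have hty : t y < 2 * r * ((k y : ℝ≥0) + 1) := by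
        have h := Nat.lt_floor_add_one (t y / (2 * r))
        rw [div_lt_iff₀ (pos_iff_ne_zero.mpr h2r)] at h
        calc t y < ((⌊t y / (2 * r)⌋₊ : ℝ≥0) + 1) * (2 * r) := h
          _ = 2 * r * ((k y : ℝ≥0) + 1) := mul_comm _ _
      calc edist x y ≤ edist x (eBase x) + edist (eBase y) y := by
            rw [h1]; exact edist_triangle _ _ _
        _ = (t x : ℝ≥0∞) + (t y : ℝ≥0∞) := by
            rw [hcoe x, edist_comm, hcoe y]
        _ ≤ (t x : ℝ≥0∞) + ((2 * r * (k y + 1) : ℝ≥0) : ℝ≥0∞) := by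
            exact add_le_add le_rfl (by exact_mod_cast hty.le)
        _ = ((t x + 2 * r * (k x + 1) : ℝ≥0) : ℝ≥0∞) := by
            rw [← h2, ← ENNReal.coe_add]
  refine ⟨{x | Even (k x)}, {x | ¬ Even (k x)}, ?_, ?_, ?_⟩
  · ext x; simp [Nat.even_or_odd, em (Even (k x))]
  · apply main
    intro a ha b hb hab
    have h1 := (key a b hab).2
    have h2 := (key b a (by rwa [edist_comm] at hab)).2
    simp only [Set.mem_setOf_eq, Nat.even_iff] at ha hb
    omega
  · apply main
    intro a ha b hb hab
    have h1 := (key a b hab).2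
    have h2 := (key b a (by rwa [edist_comm] at hab)).2
    simp only [Set.mem_setOf_eq, Nat.even_iff] at ha hb
    omega
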